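/- Let $C > 0$, $T > 0$, let $u: [0,T] \to [0,\infty)$ be continuous, and let $d: [0,T] \to [0,\infty)$ be integrable. Assume that for every $t \in [0,T]$, $u(t) + \int_0^t d(s)\,ds \le u(0) + C\int_0^t d(s)\sqrt{u(s)}\,ds$, and that $u(0) \le \frac{1}{4C^2}$. Then for every $t \in [0,T]$: $u(t) + \frac{1}{2}\int_0^t d(s)\,ds \le u(0)$. -/
import Mathlib


open MeasureTheory

/-- Bootstrap lemma closing the uniform a priori energy estimate: if
`u(t) + ∫₀ᵗ d ≤ u(0) + C ∫₀ᵗ d √u` and `u(0) ≤ 1/(4C²)`, then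
`u(t) + ½∫₀ᵗ d ≤ u(0)`. -/
theorem bootstrap_energy_estimate (C T : ℝ) (hC : 0 < C) (hT : 0 < T)
    (u d : ℝ → ℝ)
    (hu_cont : ContinuousOn u (Set.Icc 0 T))
    (hu_nonneg : ∀ t ∈ Set.Icc 0 T, 0 ≤ u t)
    (hd_nonneg : ∀ t ∈ Set.Icc 0 T, 0 ≤ d t)
    (hd_int : IntegrableOn d (Set.Icc 0 T))
    (hineq : ∀ t ∈ Set.Icc 0 T,
      u t + ∫ s in (0 : ℝ)..t, d s ≤ u 0 + C * ∫ s in (0 : ℝ)..t, d s * Real.sqrt (u s))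
    (hsmall : u 0 ≤ 1 / (4 * C ^ 2)) :
    ∀ t ∈ Set.Icc 0 T, u t + (1/2) * ∫ s in (0 : ℝ)..t, d s ≤ u 0 := by
  -- generic sqrt bound: a ≤ 1/k², k > 0 ⇒ k √a ≤ 1
  have sqrt_bd : ∀ (k a : ℝ), 0 < k → a ≤ 1 / k ^ 2 → k * Real.sqrt a ≤ 1 := by
    intro k a hk ha
    have h1 : Real.sqrt a ≤ Real.sqrt (1 / k ^ 2) := Real.sqrt_le_sqrt ha
    have h2 : Real.sqrt (1 / k ^ 2) = 1 / k := by
      rw [one_div, Real.sqrt_inv, Real.sqrt_sq hk.le, one_div]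
    calc k * Real.sqrt a ≤ k * (1 / k) := by
          rw [h2] at h1; exact mul_le_mul_of_nonneg_left h1 hk.le
      _ = 1 := by field_simp
  -- integrability of d on subintervals
  have hdI : ∀ t ∈ Set.Icc (0:ℝ) T, IntervalIntegrable d volume 0 t := by
    intro t ht
    apply IntegrableOn.intervalIntegrable
    rw [Set.uIcc_of_le ht.1]
    exact hd_int.mono_set (Set.Icc_subset_Icc le_rfl ht.2)
  have hdsI : ∀ t ∈ Set.Icc (0:ℝ) T,
      IntervalIntegrable (fun s => d s * Real.sqrt (u s)) volume 0 t := by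
    intro t ht
    exact (hdI t ht).mul_continuousOn <| by
      rw [Set.uIcc_of_le ht.1]
      exact Real.continuous_sqrt.comp_continuousOn
        (hu_cont.mono (Set.Icc_subset_Icc le_rfl ht.2))
  -- key comparison of integrals when k√u ≤ 1 pointwise
  have int_bd : ∀ t ∈ Set.Icc (0:ℝ) T, ∀ k : ℝ, 0 ≤ k →
      (∀ s ∈ Set.Icc (0:ℝ) t, k * Real.sqrt (u s) ≤ 1) →
      k * ∫ s in (0:ℝ)..t, d s * Real.sqrt (u s) ≤ ∫ s in (0:ℝ)..t, d s := by
    intro t ht k hk hpt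
    rw [← intervalIntegral.integral_const_mul]
    apply intervalIntegral.integral_mono_on ht.1 ((hdsI t ht).const_mul k) (hdI t ht)
    intro s hs
    have hsT : s ∈ Set.Icc (0:ℝ) T := ⟨hs.1, hs.2.trans ht.2⟩
    have h1 := hpt s hs
    have h2 := hd_nonneg s hsT
    have h3 := Real.sqrt_nonneg (u s)
    nlinarith
  -- main claim: u never exceeds 1/(4C²)
  have key : ∀ t ∈ Set.Icc 0 T, u t ≤ 1 / (4 * C ^ 2) := by
    by_contra hbad
    push_neg at hbad
    set B : Set ℝ := {t | t ∈ Set.Icc 0 T ∧ 1 / (4 * C ^ 2) < u t} with hBdef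
    have hBne : B.Nonempty := by
      obtain ⟨t, ht, h⟩ := hbad; exact ⟨t, ht, h⟩
    have hBbdd : BddBelow B := ⟨0, fun b hb => hb.1.1⟩
    set τ := sInf B with hτdef
    have hτ_le : ∀ b ∈ B, τ ≤ b := fun b hb => csInf_le hBbdd hb
    have hτ0 : 0 ≤ τ := le_csInf hBne fun b hb => hb.1.1
    have hτT : τ ≤ T := by
      obtain ⟨b, hb⟩ := hBne
      exact (hτ_le b hb).trans hb.1.2
    have hτmem : τ ∈ Set.Icc 0 T := ⟨hτ0, hτT⟩
    have hcτ : ContinuousWithinAt u (Set.Icc 0 T) τ := hu_cont τ hτmem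
    -- u τ ≤ 1/(4C²)
    have huτ : u τ ≤ 1 / (4 * C ^ 2) := by
      rcases eq_or_lt_of_le hτ0 with h0 | h0
      · rw [← h0]; exact hsmall
      · by_contra hgt
        push_neg at hgt
        have hev : ∀ᶠ s in nhdsWithin τ (Set.Icc 0 T), 1 / (4 * C ^ 2) < u s :=
          hcτ (Ioi_mem_nhds hgt)
        have hmono : nhdsWithin τ (Set.Ico 0 τ) ≤ nhdsWithin τ (Set.Icc 0 T) :=
          nhdsWithin_mono _ fun s hs => ⟨hs.1, hs.2.le.trans hτT⟩
        have : (nhdsWithin τ (Set.Ico 0 τ)).NeBot := right_nhdsWithin_Ico_neBot h0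
        obtain ⟨s, hs1, hs2⟩ :=
          ((hev.filter_mono hmono).and eventually_mem_nhdsWithin).exists
        have hs2' : s ∈ Set.Ico 0 τ := hs2
        exact absurd (hτ_le s ⟨⟨hs2'.1, hs2'.2.le.trans hτT⟩, hs1⟩) (not_le.2 hs2'.2)
    -- hence u τ < 1/C², so u < 1/C² near τ
    have huτ' : u τ < 1 / C ^ 2 := by
      have : 1 / (4 * C ^ 2) < 1 / C ^ 2 := by
        apply div_lt_div_of_pos_left one_pos (by positivity); nlinarith
      linarith
    have hev : ∀ᶠ s in nhdsWithin τ (Set.Icc 0 T), u s < 1 / C ^ 2 :=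
      hcτ (Iio_mem_nhds huτ')
    obtain ⟨δ, hδ, hball⟩ := Metric.mem_nhdsWithin_iff.1 hev
    -- pick t ∈ B with t < τ + δ
    obtain ⟨t, htB, htlt⟩ := Real.lt_sInf_add_pos hBne hδ
    rw [← hτdef] at htlt
    have htτ : τ ≤ t := hτ_le t htB
    have htT : t ∈ Set.Icc 0 T := htB.1
    -- on [0,t], C √u ≤ 1
    have hpt : ∀ s ∈ Set.Icc (0:ℝ) t, C * Real.sqrt (u s) ≤ 1 := by
      intro s hs
      have hsT : s ∈ Set.Icc (0:ℝ) T := ⟨hs.1, hs.2.trans htT.2⟩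
      apply sqrt_bd C (u s) hC
      rcases lt_or_ge s τ with h | h
      · -- s < τ ⇒ s ∉ B ⇒ u s ≤ 1/(4C²) ≤ 1/C²
        have hsB : s ∉ B := fun hmem => absurd (hτ_le s hmem) (not_le.2 h)
        have : u s ≤ 1 / (4 * C ^ 2) := by
          by_contra hc; push_neg at hc; exact hsB ⟨hsT, hc⟩
        have h4 : 1 / (4 * C ^ 2) ≤ 1 / C ^ 2 := by
          apply div_le_div_of_nonneg_left one_pos.le (by positivity); nlinarith
        linarith
      · -- τ ≤ s ≤ t < τ + δ ⇒ dist s τ < δ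
        have hd : dist s τ < δ := by
          rw [Real.dist_eq, abs_of_nonneg (by linarith)]
          linarith [hs.2]
        exact (hball ⟨Metric.mem_ball.2 hd, hsT⟩ : u s < 1 / C ^ 2).le
    -- contradiction with hineq at t
    have h1 := hineq t htT
    have h2 := int_bd t htT C hC.le hpt
    have : u t ≤ u 0 := by linarith
    linarith [htB.2, hsmall, this]
  -- conclude
  intro t ht
  have hpt : ∀ s ∈ Set.Icc (0:ℝ) t, (2 * C) * Real.sqrt (u s) ≤ 1 := by
    intro s hs
    have hsT : s ∈ Set.Icc (0:ℝ) T := ⟨hs.1, hs.2.trans ht.2⟩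
    apply sqrt_bd (2 * C) (u s) (by positivity)
    have := key s hsT
    have : (2 * C) ^ 2 = 4 * C ^ 2 := by ring
    rw [this]
    exact key s hsT
  have h2 := int_bd t ht (2 * C) (by positivity) hpt
  have h1 := hineq t ht
  linarith
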